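/- For any density operator ρ on ℂᵈ and any complete projective (von Neumann) measurement Π in an orthonormal basis of ℂᵈ, ½‖ρ − Π[ρ]‖₁ ≤ 1 − 1/d. -/

import Mathlib

open Matrix Kronecker BigOperators
open scoped ComplexOrder

/-- Trace norm (Schatten 1-norm): `Tr √(XᴴX)`. -/
noncomputable def traceNorm {m n : Type*} [Fintype m] [Fintype n] [DecidableEq n]
    (X : Matrix m n ℂ) : ℝ :=
  (((Matrix.posSemidef_conjTranspose_mul_self X).1.eigenvectorUnitary : Matrix n n ℂ) *
    Matrix.diagonal (((↑) : ℝ → ℂ) ∘ (√·) ∘ (Matrix.posSemidef_conjTranspose_mul_self X).1.eigenvalues) *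
    (star (Matrix.posSemidef_conjTranspose_mul_self X).1.eigenvectorUnitary : Matrix n n ℂ)).trace.re


/-- Complete projective measurement in the orthonormal basis `e`. -/
noncomputable def projMeas {d : ℕ} (e : Fin d → Fin d → ℂ)
    (τ : Matrix (Fin d) (Fin d) ℂ) : Matrix (Fin d) (Fin d) ℂ :=
  ∑ i, Matrix.vecMulVec (e i) (star (e i)) * τ * Matrix.vecMulVec (e i) (star (e i))

open scoped MatrixOrder in
lemma traceNorm_eq_of_sq {d : ℕ} (X S : Matrix (Fin d) (Fin d) ℂ) (hS : S.PosSemidef)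
    (hsq : S ^ 2 = Xᴴ * X) : traceNorm X = S.trace.re := by
  have hA := Matrix.posSemidef_conjTranspose_mul_self X
  have hR : traceNorm X = (hA.1.cfc Real.sqrt).trace.re := rfl
  have h1 : CFC.sqrt (Xᴴ * X) = hA.1.cfc Real.sqrt := by
    rw [CFC.sqrt_eq_real_sqrt _ hA.nonneg, cfcₙ_eq_cfc, Matrix.IsHermitian.cfc_eq hA.1]
  have h2 : CFC.sqrt (Xᴴ * X) = S :=
    CFC.sqrt_unique (by rw [← pow_two]; exact hsq) hS.nonneg
  rw [hR, ← h1, h2]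

open scoped MatrixOrder in
lemma traceNorm_conj {d : ℕ} (B : Matrix (Fin d) (Fin d) ℂ) (hB1 : Bᴴ * B = 1)
    (X : Matrix (Fin d) (Fin d) ℂ) : traceNorm (B * X * Bᴴ) = traceNorm X := by
  have hYe : (B * X * Bᴴ)ᴴ * (B * X * Bᴴ) = B * (Xᴴ * X) * Bᴴ := by
    simp only [Matrix.conjTranspose_mul, Matrix.conjTranspose_conjTranspose, Matrix.mul_assoc]
    rw [← Matrix.mul_assoc Bᴴ B, hB1, Matrix.one_mul]
  set S := CFC.sqrt (Xᴴ * X) with hSdef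
  have hSpsd : S.PosSemidef := (CFC.sqrt_nonneg (Xᴴ * X)).posSemidef
  have hBSpsd : (B * S * Bᴴ).PosSemidef := hSpsd.mul_mul_conjTranspose_same B
  have hsq : (B * S * Bᴴ)^2 = (B * X * Bᴴ)ᴴ * (B * X * Bᴴ) := by
    rw [hYe, pow_two]
    simp only [Matrix.mul_assoc]
    rw [← Matrix.mul_assoc Bᴴ B, hB1, Matrix.one_mul, ← Matrix.mul_assoc S S Bᴴ,
      hSdef, CFC.sqrt_mul_sqrt_self _ (Matrix.posSemidef_conjTranspose_mul_self X).nonneg]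
    simp only [Matrix.mul_assoc]
  have h := traceNorm_eq_of_sq (B * X * Bᴴ) _ hBSpsd hsq
  rw [h, traceNorm_eq_of_sq X S hSpsd (by rw [pow_two, hSdef, CFC.sqrt_mul_sqrt_self _
    (Matrix.posSemidef_conjTranspose_mul_self X).nonneg]), Matrix.trace_mul_cycle, hB1,
    Matrix.one_mul]

lemma sandwich_rank_one {d : ℕ} (a : Fin d → ℂ) (ρ : Matrix (Fin d) (Fin d) ℂ) :
    Matrix.vecMulVec a (star a) * ρ * Matrix.vecMulVec a (star a)
      = (star a ⬝ᵥ (ρ *ᵥ a)) • Matrix.vecMulVec a (star a) := by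
  ext j k
  simp only [Matrix.mul_apply, Matrix.vecMulVec_apply, Matrix.smul_apply, dotProduct,
    Matrix.mulVec, Pi.star_apply, smul_eq_mul, Finset.sum_mul, Finset.mul_sum]
  rw [Finset.sum_comm]
  exact Finset.sum_congr rfl fun l _ => Finset.sum_congr rfl fun m _ => by ring

lemma projMeas_eq {d : ℕ} (e : Fin d → Fin d → ℂ) (ρ : Matrix (Fin d) (Fin d) ℂ)
    (B : Matrix (Fin d) (Fin d) ℂ) (hBe : ∀ j i, B j i = e i j) :
    projMeas e ρ = B * Matrix.diagonal (fun i => (Bᴴ * ρ * B) i i) * Bᴴ := by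
  have h2 : ∀ i, (Bᴴ * ρ * B) i i = star (e i) ⬝ᵥ (ρ *ᵥ (e i)) := by
    intro i
    simp only [Matrix.mul_apply, Matrix.conjTranspose_apply, hBe, dotProduct,
      Matrix.mulVec, Pi.star_apply, Finset.sum_mul, Finset.mul_sum]
    rw [Finset.sum_comm]
    exact Finset.sum_congr rfl fun l _ => Finset.sum_congr rfl fun m _ => by ring
  rw [projMeas]
  have h1 : ∀ i : Fin d, Matrix.vecMulVec (e i) (star (e i)) * ρ * Matrix.vecMulVec (e i) (star (e i))
      = (star (e i) ⬝ᵥ (ρ *ᵥ (e i))) • Matrix.vecMulVec (e i) (star (e i)) :=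
    fun i => sandwich_rank_one _ _
  simp_rw [h1]
  ext j k
  simp only [Matrix.sum_apply, Matrix.smul_apply, Matrix.vecMulVec_apply, smul_eq_mul,
    Matrix.mul_apply, Matrix.diagonal_apply, Matrix.conjTranspose_apply, hBe, h2, Pi.star_apply,
    mul_ite, ite_mul, mul_zero, zero_mul, Finset.sum_ite_eq, Finset.sum_ite_eq',
    Finset.mem_univ, if_true]
  exact Finset.sum_congr rfl fun i _ => by ring

lemma scalar_key {d : ℕ} (hd : 2 ≤ d) (α : ℝ) (hα : 0 < α) (q w : Fin d → ℝ)
    (hq : ∀ i, 0 ≤ q i) (hw : ∀ i, 0 ≤ w i) (hqs : ∑ i, q i = 1)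
    (hcs : ∀ i, (α + w i)^2 * q i ≤ w i)
    (ht : α + ∑ i, w i * q i ≤ 1) : α ≤ 1 - 1/d := by
  have hd' : (2:ℝ) ≤ (d:ℝ) := by exact_mod_cast hd
  have h4 : ∀ i, 4 * α * q i ≤ 1 := by
    intro i
    rcases eq_or_lt_of_le (hw i) with h0 | h0
    · have h1 := hcs i
      rw [← h0] at h1
      have hqi : q i ≤ 0 := by nlinarith [mul_pos hα hα]
      nlinarith [hq i]
    · nlinarith [hcs i, mul_nonneg (le_of_lt hα) (hq i), hq i, sq_nonneg (α - w i)]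
  have hsq : ∀ i, 1 - 2*α*(q i) - 2*(q i)*(w i) ≤ Real.sqrt (1 - 4*α*(q i)) := by
    intro i
    have hx : (0:ℝ) ≤ 1 - 4*α*(q i) := by linarith [h4 i]
    have hs := Real.sq_sqrt hx
    have hsn := Real.sqrt_nonneg (1 - 4*α*(q i))
    rcases le_or_gt (1 - 2*α*(q i) - 2*(q i)*(w i)) 0 with h | h
    · linarith
    · nlinarith [mul_le_mul_of_nonneg_left (hcs i) (hq i)]
  have e1 : ∑ i : Fin d, (1 - 2*α*(q i) - 2*(q i)*(w i))
      = (d:ℝ) - 2*α - 2*(∑ i, w i * q i) := by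
    have e0 : ∀ i : Fin d, 1 - 2*α*(q i) - 2*(q i)*(w i)
        = 1 - 2*α*(q i) - 2*(w i * q i) := fun i => by ring
    simp_rw [e0]
    rw [Finset.sum_sub_distrib, Finset.sum_sub_distrib, ← Finset.mul_sum, ← Finset.mul_sum,
      hqs, Finset.sum_const, Finset.card_univ, Fintype.card_fin, nsmul_eq_mul, mul_one]; ring
  have hsum : (d:ℝ) - 2*α - 2*(∑ i, w i * q i) ≤ ∑ i, Real.sqrt (1 - 4*α*(q i)) := by
    rw [← e1]
    exact Finset.sum_le_sum (fun i _ => hsq i)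
  have e2 : ∑ i : Fin d, (1 - 4*α*(q i)) = (d:ℝ) - 4*α := by
    rw [Finset.sum_sub_distrib, ← Finset.mul_sum, hqs, Finset.sum_const, Finset.card_univ,
      Fintype.card_fin, nsmul_eq_mul, mul_one]; ring
  have hDnn : (0:ℝ) ≤ (d:ℝ) - 4*α := by
    rw [← e2]
    exact Finset.sum_nonneg (fun i _ => by linarith [h4 i])
  have hcs2 : ∑ i, Real.sqrt (1 - 4*α*(q i)) ≤ Real.sqrt d * Real.sqrt ((d:ℝ) - 4*α) := by
    have h := Real.sum_sqrt_mul_sqrt_le (f := fun _ : Fin d => (1:ℝ))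
      (g := fun i => 1 - 4*α*(q i)) Finset.univ (fun _ => zero_le_one)
      (fun i => by linarith [h4 i])
    simpa [e2] using h
  have key : (d:ℝ) - 2 ≤ Real.sqrt d * Real.sqrt ((d:ℝ) - 4*α) := by linarith
  have hsq2 : ((d:ℝ) - 2)^2 ≤ (d:ℝ) * ((d:ℝ) - 4*α) := by
    have h1 : (Real.sqrt d * Real.sqrt ((d:ℝ) - 4*α))^2 = (d:ℝ) * ((d:ℝ) - 4*α) := by
      rw [mul_pow, Real.sq_sqrt (by linarith), Real.sq_sqrt hDnn]
    nlinarith [key, Real.sqrt_nonneg (d:ℝ), Real.sqrt_nonneg ((d:ℝ) - 4*α)]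
  have hdpos : (0:ℝ) < d := by linarith
  have h5 : α * d ≤ (d:ℝ) - 1 := by nlinarith
  have h6 : α ≤ ((d:ℝ) - 1)/d := (le_div_iff₀ hdpos).mpr h5
  have h7 : ((d:ℝ) - 1)/d = 1 - 1/d := by
    rw [sub_div, div_self (ne_of_gt hdpos)]
  linarith [h7 ▸ h6]

lemma eig_bound_aux {d : ℕ} (hd : 2 ≤ d) (P : Matrix (Fin d) (Fin d) ℂ)
    (hPh : Pᴴ = P) (hP2 : P * P = P) (α : ℝ) (hα : 0 < α)
    (v : Fin d → ℂ) (hv : ∑ i, Complex.normSq (v i) = 1)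
    (hAv : (P - Matrix.diagonal (fun i => P i i)) *ᵥ v = (α : ℂ) • v) :
    (α + ∑ i, (P i i).re * Complex.normSq (v i) ≤ 1)
    ∧ (∀ i, (α + (P i i).re)^2 * Complex.normSq (v i) ≤ (P i i).re)
    ∧ (∀ i, 0 ≤ (P i i).re) := by
  classical
  have hconj : ∀ i j, (starRingEnd ℂ) (P i j) = P j i := by
    intro i j
    have := congrFun (congrFun hPh j) i
    simpa [Matrix.conjTranspose_apply] using this
  set w : Fin d → ℝ := fun i => (P i i).re with hw
  have hPw : ∀ i, P i i = (w i : ℂ) := fun i =>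
    (Complex.conj_eq_iff_re.mp (hconj i i)).symm
  have hPv : ∀ i, (P *ᵥ v) i = ((α + w i : ℝ) : ℂ) * v i := by
    intro i
    have h : P *ᵥ v = (α : ℂ) • v + (Matrix.diagonal (fun i => P i i)) *ᵥ v := by
      rw [← hAv, Matrix.sub_mulVec]; ring_nf
    have h2 := congrFun h i
    rw [h2]
    simp [Matrix.mulVec_diagonal, hPw i]
    push_cast
    ring
  have hwsum : ∀ i, w i = ∑ j, Complex.normSq (P i j) := by
    intro i
    have h := congrFun (congrFun hP2 i) i
    rw [Matrix.mul_apply] at h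
    have h2 : P i i = ∑ j, (Complex.normSq (P i j) : ℂ) := by
      rw [← h]
      congr 1
      ext j
      rw [← hconj i j, mul_comm, Complex.normSq_eq_conj_mul_self]
    have := congrArg Complex.re h2
    simpa [Complex.ofReal_sum] using this
  have hwnn : ∀ i, 0 ≤ w i := fun i => by
    rw [hwsum i]; exact Finset.sum_nonneg fun j _ => Complex.normSq_nonneg _
  set q : Fin d → ℝ := fun i => Complex.normSq (v i) with hq
  have hqnn : ∀ i, 0 ≤ q i := fun i => Complex.normSq_nonneg _
  have hcs : ∀ i, (α + w i)^2 * q i ≤ w i := by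
    intro i
    have e1 : Complex.normSq ((P *ᵥ v) i) = (α + w i)^2 * q i := by
      rw [hPv i, Complex.normSq_mul, Complex.normSq_ofReal]
      ring
    have e2 : Complex.normSq ((P *ᵥ v) i) ≤ (∑ j, Complex.normSq (P i j)) * (∑ j, Complex.normSq (v j)) := by
      have habs : ‖(P *ᵥ v) i‖ ≤ ∑ j, ‖P i j‖ * ‖v j‖ := by
        rw [Matrix.mulVec, dotProduct]
        refine (norm_sum_le _ _).trans ?_
        refine le_of_eq (Finset.sum_congr rfl fun j _ => ?_)
        exact norm_mul _ _
      have hcs2 := Finset.sum_mul_sq_le_sq_mul_sq Finset.univ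
        (fun j => ‖P i j‖) (fun j => ‖v j‖)
      calc Complex.normSq ((P *ᵥ v) i) = (‖(P *ᵥ v) i‖)^2 := (Complex.sq_norm _).symm
        _ ≤ (∑ j, ‖P i j‖ * ‖v j‖)^2 := by
            apply pow_le_pow_left₀ (norm_nonneg _) habs
        _ ≤ (∑ j, (‖P i j‖)^2) * (∑ j, (‖v j‖)^2) := hcs2
        _ = (∑ j, Complex.normSq (P i j)) * (∑ j, Complex.normSq (v j)) := by
            simp [Complex.sq_norm]
    rw [← e1, hwsum i]
    calc Complex.normSq ((P *ᵥ v) i)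
        ≤ (∑ j, Complex.normSq (P i j)) * (∑ j, Complex.normSq (v j)) := e2
      _ = ∑ j, Complex.normSq (P i j) := by rw [hv, mul_one]
  have e3 : ∑ i, ((α + w i) * q i) = α + ∑ i, w i * q i := by
    have h' : ∀ i : Fin d, (α + w i) * q i = α * q i + w i * q i := fun i => by ring
    simp_rw [h']
    rw [Finset.sum_add_distrib, ← Finset.mul_sum, hv, mul_one]
  have hS : α + ∑ i, w i * q i = ∑ i, (α + w i)^2 * q i := by
    have hb : ∀ i, (starRingEnd ℂ) (v i) * (P *ᵥ v) i = (((α + w i) * q i : ℝ) : ℂ) := by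
      intro i
      rw [hPv i]
      calc (starRingEnd ℂ) (v i) * (((α + w i : ℝ) : ℂ) * v i)
          = ((α + w i : ℝ) : ℂ) * ((starRingEnd ℂ) (v i) * v i) := by ring
        _ = ((α + w i : ℝ) : ℂ) * (Complex.normSq (v i) : ℂ) := by
            rw [← Complex.normSq_eq_conj_mul_self]
        _ = (((α + w i) * q i : ℝ) : ℂ) := by push_cast; ring
    have hPP : P *ᵥ v = P *ᵥ (P *ᵥ v) := by rw [Matrix.mulVec_mulVec, hP2]
    have hb2 : ∑ i, (starRingEnd ℂ) (v i) * (P *ᵥ v) i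
        = ∑ j, (Complex.normSq ((P *ᵥ v) j) : ℂ) := by
      set u := P *ᵥ v with hu
      have swap : ∑ i, (starRingEnd ℂ) (v i) * (P *ᵥ u) i
          = ∑ j, (∑ i, (starRingEnd ℂ) (v i) * P i j) * u j := by
        simp only [Matrix.mulVec, dotProduct, Finset.mul_sum]
        rw [Finset.sum_comm]
        congr 1; ext j
        rw [Finset.sum_mul]
        congr 1; ext i; ring
      conv_lhs => rw [hPP]
      rw [swap]
      congr 1; ext j
      have hcol : ∑ i, (starRingEnd ℂ) (v i) * P i j = (starRingEnd ℂ) (u j) := by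
        rw [hu, Matrix.mulVec, dotProduct, map_sum]
        congr 1; ext i
        rw [_root_.map_mul, hconj j i]
        ring
      rw [hcol, mul_comm, Complex.mul_conj]
    have hA : (∑ i, (((α + w i) * q i : ℝ) : ℂ)) = ∑ j, (Complex.normSq ((P *ᵥ v) j) : ℂ) := by
      rw [← hb2]
      exact (Finset.sum_congr rfl fun i _ => (hb i).symm)
    have e4 : ∀ j, Complex.normSq ((P *ᵥ v) j) = (α + w j)^2 * q j := by
      intro j
      rw [hPv j, Complex.normSq_mul, Complex.normSq_ofReal]; ring
    simp_rw [e4] at hA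
    have hA' : (∑ i, ((α + w i) * q i)) = ∑ i, (α + w i)^2 * q i := by exact_mod_cast hA
    rw [e3] at hA'
    exact hA'
  -- t ≤ 1 via Cauchy-Schwarz
  have ht1 : α + ∑ i, w i * q i ≤ 1 := by
    have hfg := Finset.sum_mul_sq_le_sq_mul_sq Finset.univ
      (fun i => (α + w i) * Real.sqrt (q i)) (fun i => Real.sqrt (q i))
    have e5 : ∀ i : Fin d, ((α + w i) * Real.sqrt (q i)) * Real.sqrt (q i) = (α + w i) * q i := by
      intro i
      rw [mul_assoc, Real.mul_self_sqrt (hqnn i)]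
    have e6 : ∀ i : Fin d, ((α + w i) * Real.sqrt (q i))^2 = (α + w i)^2 * q i := by
      intro i
      rw [mul_pow, Real.sq_sqrt (hqnn i)]
    have e7 : ∀ i : Fin d, (Real.sqrt (q i))^2 = q i := fun i => Real.sq_sqrt (hqnn i)
    simp_rw [e5, e6, e7] at hfg
    rw [e3, hv, mul_one, ← hS] at hfg
    -- hfg : (α + ∑ w q)^2 ≤ (α + ∑ w q)
    nlinarith [hfg]
  exact ⟨ht1, hcs, hwnn⟩


lemma conj_sandwich_eq {d : ℕ} (U : Matrix (Fin d) (Fin d) ℂ) (hU1 : Uᴴ * U = 1)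
    (a b : Fin d → ℂ) :
    (U * Matrix.diagonal a * Uᴴ) * (U * Matrix.diagonal b * Uᴴ)
      = U * Matrix.diagonal (fun i => a i * b i) * Uᴴ := by
  calc (U * Matrix.diagonal a * Uᴴ) * (U * Matrix.diagonal b * Uᴴ)
      = U * Matrix.diagonal a * (Uᴴ * U) * (Matrix.diagonal b * Uᴴ) := by
        simp only [Matrix.mul_assoc]
    _ = U * (Matrix.diagonal a * Matrix.diagonal b) * Uᴴ := by
        rw [hU1]; simp only [Matrix.mul_one, Matrix.mul_assoc]
    _ = _ := by rw [Matrix.diagonal_mul_diagonal]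

lemma trace_conj_sandwich {d : ℕ} (U : Matrix (Fin d) (Fin d) ℂ) (hU1 : Uᴴ * U = 1)
    (a : Fin d → ℂ) :
    (U * Matrix.diagonal a * Uᴴ).trace = ∑ i, a i := by
  rw [Matrix.trace_mul_cycle, hU1, Matrix.one_mul, Matrix.trace_diagonal]

-- trace norm of a Hermitian matrix is the sum of |eigenvalues|
lemma traceNorm_hermitian {d : ℕ} (M : Matrix (Fin d) (Fin d) ℂ) (hM : M.IsHermitian) :
    traceNorm M = ∑ i, |hM.eigenvalues i| := by
  classical
  set U : Matrix (Fin d) (Fin d) ℂ := (hM.eigenvectorUnitary : Matrix (Fin d) (Fin d) ℂ) with hU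
  have hU1 : Uᴴ * U = 1 := by
    rw [hU, ← star_eq_conjTranspose]
    exact Matrix.mem_unitaryGroup_iff'.mp hM.eigenvectorUnitary.2
  set μ := hM.eigenvalues with hμ
  have hspec : M = U * Matrix.diagonal (fun i => ((μ i : ℝ) : ℂ)) * Uᴴ := by
    have := hM.spectral_theorem
    rw [Unitary.conjStarAlgAut_apply] at this
    rw [← star_eq_conjTranspose]
    exact this
  set S : Matrix (Fin d) (Fin d) ℂ := U * Matrix.diagonal (fun i => ((|μ i| : ℝ) : ℂ)) * Uᴴ with hS
  have hSpsd : S.PosSemidef := by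
    apply Matrix.PosSemidef.mul_mul_conjTranspose_same
    refine Matrix.posSemidef_diagonal_iff.mpr fun i => ?_
    exact_mod_cast abs_nonneg (μ i)
  have hSsq : S ^ 2 = Mᴴ * M := by
    rw [pow_two, hM.eq]
    conv_rhs => rw [hspec]
    rw [hS, conj_sandwich_eq U hU1, conj_sandwich_eq U hU1]
    have h : (fun i => ((|μ i| : ℝ) : ℂ) * ((|μ i| : ℝ) : ℂ))
        = fun i => ((μ i : ℝ) : ℂ) * ((μ i : ℝ) : ℂ) := by
      funext i
      rw [← Complex.ofReal_mul, ← Complex.ofReal_mul, abs_mul_abs_self]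
    rw [h]
  have hsqrt := traceNorm_eq_of_sq M S hSpsd hSsq
  rw [hsqrt, hS, trace_conj_sandwich U hU1]
  rw [← Complex.ofReal_sum]
  exact Complex.ofReal_re _

lemma psd_diag {d : ℕ} (X : Matrix (Fin d) (Fin d) ℂ) (hX : X.PosSemidef) (k : Fin d) :
    X k k = ((X k k).re : ℂ) ∧ 0 ≤ (X k k).re := by
  constructor
  · exact (Complex.conj_eq_iff_re.mp (by
      have := congrFun (congrFun hX.1 k) k
      simpa [Matrix.conjTranspose_apply] using this)).symm
  · have h := hX.dotProduct_mulVec_nonneg (Pi.single k 1)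
    have e : dotProduct (star (Pi.single k 1)) (X *ᵥ (Pi.single k 1)) = X k k := by
      simp [Matrix.mulVec_single, dotProduct, Pi.single_apply]
    rw [e] at h
    have := (Complex.le_def.mp h).1
    simpa using this

-- all eigenvalues of P - diag(P) are ≤ 1 - 1/d for Hermitian idempotent P
lemma eig_bound {d : ℕ} (hd : 2 ≤ d) (P : Matrix (Fin d) (Fin d) ℂ)
    (hPh : Pᴴ = P) (hP2 : P * P = P) (α : ℝ)
    (v : Fin d → ℂ) (hv : ∑ i, Complex.normSq (v i) = 1)
    (hAv : (P - Matrix.diagonal (fun i => P i i)) *ᵥ v = (α : ℂ) • v) :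
    α ≤ 1 - 1/d := by
  have hd1 : (1:ℝ) ≤ (d:ℝ) := by exact_mod_cast Nat.one_le_of_lt hd
  rcases le_or_gt α 0 with h | h
  · have : 1/(d:ℝ) ≤ 1 := by
      rw [div_le_one (by linarith)]; exact hd1
    linarith
  · obtain ⟨ht, hcs, hwnn⟩ := eig_bound_aux hd P hPh hP2 α h v hv hAv
    exact scalar_key hd α h (fun i => Complex.normSq (v i)) (fun i => (P i i).re)
      (fun i => Complex.normSq_nonneg _) hwnn hv hcs ht


-- the core theorem in the standard basis
lemma core {d : ℕ} (hd : 0 < d) (σ : Matrix (Fin d) (Fin d) ℂ) (hσ : σ.PosSemidef)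
    (hσt : σ.trace = 1) :
    (1/2) * traceNorm (σ - Matrix.diagonal (fun i => σ i i)) ≤ 1 - 1/d := by
  classical
  set M := σ - Matrix.diagonal (fun i => σ i i) with hMdef
  have hdiagH : (Matrix.diagonal (fun i => σ i i)).IsHermitian := by
    refine Matrix.isHermitian_diagonal_of_self_adjoint _ (funext fun i => ?_)
    show star (σ i i) = σ i i
    rw [(psd_diag σ hσ i).1, RCLike.star_def, Complex.conj_ofReal]
  have hMh : M.IsHermitian := hσ.1.sub hdiagH
  rcases eq_or_lt_of_le (Nat.one_le_iff_ne_zero.mpr (Nat.pos_iff_ne_zero.mp hd)) with h1 | h2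
  · -- d = 1
    have hd1 : d = 1 := h1.symm
    subst hd1
    have hM0 : M = 0 := by
      ext i j
      have hij : i = j := Subsingleton.elim i j
      subst hij
      simp [hMdef]
    have hz : traceNorm (0 : Matrix (Fin 1) (Fin 1) ℂ) = 0 := by
      have h0 : (0 : Matrix (Fin 1) (Fin 1) ℂ).PosSemidef := Matrix.PosSemidef.zero
      rw [traceNorm_eq_of_sq _ 0 h0 (by simp)]
      simp
    rw [hM0, hz]
    norm_num
  · -- d ≥ 2
    have hd2 : 2 ≤ d := h2
    have hd1 : (1:ℝ) ≤ (d:ℝ) := by exact_mod_cast hd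
    -- eigen-decomposition of M
    set U : Matrix (Fin d) (Fin d) ℂ := (hMh.eigenvectorUnitary : Matrix (Fin d) (Fin d) ℂ)
      with hU
    have hU1 : Uᴴ * U = 1 := by
      rw [hU, ← star_eq_conjTranspose]
      exact Matrix.mem_unitaryGroup_iff'.mp hMh.eigenvectorUnitary.2
    set μ := hMh.eigenvalues with hμ
    have hspec : M = U * Matrix.diagonal (fun i => ((μ i : ℝ) : ℂ)) * Uᴴ := by
      have := hMh.spectral_theorem
      rw [Unitary.conjStarAlgAut_apply] at this
      rw [← star_eq_conjTranspose]
      exact this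
    -- trace of M is zero
    have htrM : M.trace = 0 := by
      have hdd : (Matrix.diagonal fun i => σ i i).trace = σ.trace := by
        rw [Matrix.trace_diagonal]; rfl
      rw [hMdef, Matrix.trace_sub, hdd, hσt]; ring
    have hμsum : ∑ i, μ i = 0 := by
      have h := trace_conj_sandwich U hU1 (fun i => ((μ i : ℝ) : ℂ))
      rw [← hspec, htrM] at h
      have h2 : ((∑ i, μ i : ℝ) : ℂ) = 0 := by push_cast; rw [← h]
      exact_mod_cast h2
    -- half trace norm = sum of positive eigenvalues
    set f : Fin d → ℝ := fun i => if 0 < μ i then 1 else 0 with hf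
    have htn : (1/2) * traceNorm M = ∑ i, f i * μ i := by
      rw [traceNorm_hermitian M hMh, ← hμ]
      have habs : ∀ i, |μ i| = 2 * (f i * μ i) - μ i := by
        intro i
        rw [hf]
        by_cases h : 0 < μ i
        · rw [abs_of_pos h]; simp only [if_pos h]; ring
        · rw [abs_of_nonpos (le_of_not_gt h)]; simp only [if_neg h]; ring
      simp_rw [habs]
      rw [Finset.sum_sub_distrib, ← Finset.mul_sum, hμsum]
      ring
    -- the positive-part projector
    set P : Matrix (Fin d) (Fin d) ℂ := U * Matrix.diagonal (fun i => ((f i : ℝ) : ℂ)) * Uᴴ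
      with hP
    have hstar : (Matrix.diagonal (fun i => ((f i : ℝ) : ℂ)))ᴴ
        = Matrix.diagonal (fun i => ((f i : ℝ) : ℂ)) := by
      have hstarf : (star fun i => ((f i : ℝ) : ℂ)) = (fun i => ((f i : ℝ) : ℂ)) := by
        funext i
        show star (((f i) : ℝ) : ℂ) = _
        rw [RCLike.star_def, Complex.conj_ofReal]
      rw [Matrix.diagonal_conjTranspose, hstarf]
    have hPh : Pᴴ = P := by
      rw [hP, Matrix.conjTranspose_mul, Matrix.conjTranspose_mul,
        Matrix.conjTranspose_conjTranspose, hstar, ← Matrix.mul_assoc]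
    have hP2 : P * P = P := by
      have hfix : (fun i => ((f i : ℝ) : ℂ) * ((f i : ℝ) : ℂ)) = (fun i => ((f i : ℝ) : ℂ)) := by
        funext i
        rw [hf]
        by_cases h : 0 < μ i <;> simp [h]
      rw [hP, conj_sandwich_eq U hU1, hfix]
    -- trace identities
    have hPM : (P * M).trace = ∑ i, ((f i * μ i : ℝ) : ℂ) := by
      conv_lhs => rw [hP, hspec]
      rw [conj_sandwich_eq U hU1, trace_conj_sandwich U hU1]
      exact Finset.sum_congr rfl fun i _ => by push_cast; ring
    -- A = P - diag(P)
    set A : Matrix (Fin d) (Fin d) ℂ := P - Matrix.diagonal (fun i => P i i) with hA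
    have hPdh : ∀ i, P i i = ((P i i).re : ℂ) := by
      intro i
      exact (Complex.conj_eq_iff_re.mp (by
        have := congrFun (congrFun hPh i) i
        simpa [Matrix.conjTranspose_apply] using this)).symm
    have htrace_eq : (P * M).trace = (A * σ).trace := by
      have e1 : (P * Matrix.diagonal (fun i => σ i i)).trace = ∑ i, P i i * σ i i := by
        simp [Matrix.trace, Matrix.diag, Matrix.mul_diagonal]
      have e2 : ((Matrix.diagonal (fun i => P i i)) * σ).trace = ∑ i, P i i * σ i i := by
        simp [Matrix.trace, Matrix.diag, Matrix.diagonal_mul]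
      rw [hMdef, hA, Matrix.mul_sub, Matrix.sub_mul, Matrix.trace_sub, Matrix.trace_sub, e1, e2]
    -- Hermitian A and its eigen-decomposition
    have hAherm : A.IsHermitian := by
      rw [hA]
      refine Matrix.IsHermitian.sub hPh ?_
      refine Matrix.isHermitian_diagonal_of_self_adjoint _ (funext fun i => ?_)
      show star (P i i) = P i i
      rw [hPdh i, RCLike.star_def, Complex.conj_ofReal]
    set W : Matrix (Fin d) (Fin d) ℂ := (hAherm.eigenvectorUnitary : Matrix (Fin d) (Fin d) ℂ)
      with hW
    have hW1 : Wᴴ * W = 1 := by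
      rw [hW, ← star_eq_conjTranspose]
      exact Matrix.mem_unitaryGroup_iff'.mp hAherm.eigenvectorUnitary.2
    have hW2 : W * Wᴴ = 1 := by
      rw [hW, ← star_eq_conjTranspose]
      exact Matrix.mem_unitaryGroup_iff.mp hAherm.eigenvectorUnitary.2
    set β := hAherm.eigenvalues with hβ
    have hAspec : A = W * Matrix.diagonal (fun i => ((β i : ℝ) : ℂ)) * Wᴴ := by
      have := hAherm.spectral_theorem
      rw [Unitary.conjStarAlgAut_apply] at this
      rw [← star_eq_conjTranspose]
      exact this
    set T : Matrix (Fin d) (Fin d) ℂ := Wᴴ * σ * W with hT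
    have hTpsd : T.PosSemidef := hσ.conjTranspose_mul_mul_same W
    have htrT : T.trace = 1 := by
      rw [hT, Matrix.trace_mul_cycle, hW2, Matrix.one_mul, hσt]
    have htrAσ : (A * σ).trace = ∑ k, T k k * ((β k : ℝ) : ℂ) := by
      conv_lhs => rw [hAspec]
      rw [Matrix.trace_mul_cycle, Matrix.trace_mul_cycle, ← Matrix.mul_assoc]
      rw [← hT]
      simp [Matrix.trace, Matrix.diag, Matrix.mul_diagonal]
    have hc : ∀ k, T k k = ((T k k).re : ℂ) := fun k => (psd_diag T hTpsd k).1
    have hcnn : ∀ k, 0 ≤ (T k k).re := fun k => (psd_diag T hTpsd k).2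
    have hcsum : ∑ k, (T k k).re = 1 := by
      have h := congrArg Complex.re htrT
      have h2 : T.trace = ∑ k, T k k := rfl
      rw [h2, Complex.re_sum] at h
      simpa using h
    -- eigenvalue bound for each k
    have hβle : ∀ k, β k ≤ 1 - 1/(d:ℝ) := by
      intro k
      have hbnorm : ∑ i, Complex.normSq ((hAherm.eigenvectorBasis k) i) = 1 := by
        have h1 : ‖hAherm.eigenvectorBasis k‖ = 1 := hAherm.eigenvectorBasis.orthonormal.1 k
        have h2 := EuclideanSpace.norm_eq (hAherm.eigenvectorBasis k)
        rw [h1] at h2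
        have h3 : ∑ i, ‖(hAherm.eigenvectorBasis k) i‖^2 = 1 := by
          have h4 : (0:ℝ) ≤ ∑ i, ‖(hAherm.eigenvectorBasis k) i‖^2 :=
            Finset.sum_nonneg fun i _ => sq_nonneg _
          nlinarith [Real.sq_sqrt h4, h2.symm]
        rw [← h3]
        exact Finset.sum_congr rfl fun i _ => by
          rw [Complex.normSq_eq_norm_sq]
      have hAv : A *ᵥ (fun i => (hAherm.eigenvectorBasis k) i)
          = ((β k : ℝ) : ℂ) • (fun i => (hAherm.eigenvectorBasis k) i) := by
        have h := hAherm.mulVec_eigenvectorBasis k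
        funext i
        have h2 := congrFun h i
        simpa [Complex.real_smul] using h2
      refine eig_bound hd2 P hPh hP2 (β k) (fun i => (hAherm.eigenvectorBasis k) i) hbnorm ?_
      rw [← hA]
      exact hAv
    -- final assembly
    have hL : (∑ i, ((f i * μ i : ℝ) : ℂ)).re = ∑ i, f i * μ i := by
      rw [← Complex.ofReal_sum]; exact Complex.ofReal_re _
    have hR : (∑ k, T k k * ((β k : ℝ) : ℂ)).re = ∑ k, β k * (T k k).re := by
      rw [Complex.re_sum]
      refine Finset.sum_congr rfl fun k _ => ?_
      rw [hc k, ← Complex.ofReal_mul, Complex.ofReal_re, Complex.ofReal_re]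
      ring
    have hfinal : (1/2) * traceNorm M = ∑ k, β k * (T k k).re := by
      rw [htn, ← hL, hPM.symm.trans (htrace_eq.trans htrAσ), hR]
    rw [hfinal]
    calc ∑ k, β k * (T k k).re ≤ ∑ k, (1 - 1/(d:ℝ)) * (T k k).re :=
          Finset.sum_le_sum (fun k _ => mul_le_mul_of_nonneg_right (hβle k) (hcnn k))
      _ = 1 - 1/(d:ℝ) := by rw [← Finset.mul_sum, hcsum, mul_one]

/-- for any density operator `ρ` on `ℂᵈ` and any complete projective
measurement `Π`, `½‖ρ − Π[ρ]‖₁ ≤ 1 − 1/d`. -/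
theorem disturbance_state_le {d : ℕ} (hd : 0 < d)
    (ρ : Matrix (Fin d) (Fin d) ℂ) (hρ : ρ.PosSemidef) (hρt : ρ.trace = 1)
    (e : Fin d → Fin d → ℂ)
    (he : ∀ i j, star (e i) ⬝ᵥ e j = if i = j then 1 else 0) :
    (1 / 2) * traceNorm (ρ - projMeas e ρ) ≤ 1 - 1 / d := by
  classical
  set B : Matrix (Fin d) (Fin d) ℂ := Matrix.of (fun j i => e i j) with hBdef
  have hBe : ∀ j i, B j i = e i j := fun j i => rfl
  have hB1 : Bᴴ * B = 1 := by
    ext i k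
    have h := he i k
    rw [dotProduct] at h
    simp only [Matrix.mul_apply, Matrix.conjTranspose_apply, hBe, Matrix.one_apply,
      Pi.star_apply] at h ⊢
    exact h
  have hB2 : B * Bᴴ = 1 := mul_eq_one_comm.mp hB1
  set σ : Matrix (Fin d) (Fin d) ℂ := Bᴴ * ρ * B with hσdef
  have hσpsd : σ.PosSemidef := hρ.conjTranspose_mul_mul_same B
  have hσt : σ.trace = 1 := by
    rw [hσdef, Matrix.trace_mul_cycle, hB2, Matrix.one_mul, hρt]
  have hρeq : ρ = B * σ * Bᴴ := by
    rw [hσdef]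
    calc ρ = (B * Bᴴ) * ρ * (B * Bᴴ) := by rw [hB2, Matrix.one_mul, Matrix.mul_one]
      _ = B * (Bᴴ * ρ * B) * Bᴴ := by simp only [Matrix.mul_assoc]
  have hdiff : ρ - projMeas e ρ = B * (σ - Matrix.diagonal (fun i => σ i i)) * Bᴴ := by
    rw [projMeas_eq e ρ B hBe, Matrix.mul_sub, Matrix.sub_mul, ← hσdef, ← hρeq]
  rw [hdiff, traceNorm_conj B hB1]
  exact core hd σ hσpsd hσt
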